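/- Let G = (U,α) and H = (V,β) be connected weighted graphs with label functions ψ_G : U → 𝓐 and ψ_H : V → 𝓐 such that ψ_G and ψ_H are both locally injective (injective on each neighborhood N_G(u) = {u' : α(u,u') > 0}, respectively N_H(v)), and such that each has a magic symbol (there is u* ∈ U with ψ_G(u') = ψ_G(u*) only for u' = u*, and v* ∈ V with ψ_H(v') = ψ_H(v*) only for v' = v*). Let c_Ψ(u,v) = 1 if ψ_G(u) ≠ ψ_H(v) and 0 otherwise. If ρ_{c_Ψ}(G,H) = 0, then: (1) there is a graph isomorphism f : U → V with α(u,u') = β(f(u),f(u')) and ψ_H(f(u)) = ψ_G(u) for all u, u' ∈ U; and (2) the set of optimal weight joinings J*_{c_Ψ}(α,β) contains exactly one element, and this unique optimal weight joining is bijective. -/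
import Mathlib


open Finset

def IsWeightFunction {U : Type*} [Fintype U] (α : U → U → ℝ) : Prop :=
  (∀ u u', 0 ≤ α u u') ∧ (∀ u u', α u u' = α u' u) ∧ (∑ u, ∑ u', α u u' = 1)

noncomputable def marginal {U : Type*} [Fintype U] (α : U → U → ℝ) (u : U) : ℝ :=
  ∑ u', α u u'

def IsWeightJoining {U V : Type*} [Fintype U] [Fintype V]
    (α : U → U → ℝ) (β : V → V → ℝ) (γ : U × V → U × V → ℝ) : Prop :=
  IsWeightFunction γ ∧
  (∀ u, ∑ v, marginal γ (u, v) = marginal α u) ∧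
  (∀ v, ∑ u, marginal γ (u, v) = marginal β v) ∧
  (∀ u u' v, marginal α u * ∑ v', γ (u, v) (u', v') = α u u' * marginal γ (u, v)) ∧
  (∀ v v' u, marginal β v * ∑ u', γ (u, v) (u', v') = β v v' * marginal γ (u, v))

def weightJoinings {U V : Type*} [Fintype U] [Fintype V]
    (α : U → U → ℝ) (β : V → V → ℝ) : Set (U × V → U × V → ℝ) :=
  {γ | IsWeightJoining α β γ}

noncomputable def ogjCost {U V : Type*} [Fintype U] [Fintype V]
    (c : U → V → ℝ) (γ : U × V → U × V → ℝ) : ℝ :=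
  ∑ p : U × V, c p.1 p.2 * marginal γ p

/-- A weighted graph `(U, α)` is connected if any two distinct vertices are joined by
a path of positive-weight edges. -/
def IsConnectedWeight {U : Type*} [Fintype U] (α : U → U → ℝ) : Prop :=
  ∀ u u' : U, u ≠ u' → ∃ n, ∃ w : Fin (n + 1) → U, w 0 = u ∧ w (Fin.last n) = u' ∧
    ∀ i : Fin n, 0 < α (w i.castSucc) (w i.succ)

/-- A weight joining is bijective if each `u ∈ U` has a unique `v ∈ V` with positive
joint marginal and vice versa. -/
def IsBijectiveJoining {U V : Type*} [Fintype U] [Fintype V]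
    (γ : U × V → U × V → ℝ) : Prop :=
  (∀ u : U, ∃! v : V, 0 < marginal γ (u, v)) ∧ (∀ v : V, ∃! u : U, 0 < marginal γ (u, v))

/-- The set `J*(α,β)` of weight joinings minimizing the cost `⟨c, r_γ⟩`. -/
def optimalJoinings {U V : Type*} [Fintype U] [Fintype V]
    (α : U → U → ℝ) (β : V → V → ℝ) (c : U → V → ℝ) : Set (U × V → U × V → ℝ) :=
  {γ ∈ weightJoinings α β | ∀ γ' ∈ weightJoinings α β, ogjCost c γ ≤ ogjCost c γ'}

open Classical in
/-- The 0-1 label-agreement cost function induced by label functions. -/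
noncomputable def labelCost {U V A : Type*} (ψG : U → A) (ψH : V → A) : U → V → ℝ :=
  fun u v => if ψG u = ψH v then 0 else 1

lemma exists_pos_of_sum_pos'' {ι : Type*} [Fintype ι] {f : ι → ℝ}
    (h : 0 < ∑ i, f i) : ∃ i, 0 < f i := by
  by_contra hc
  push_neg at hc
  have : ∑ i, f i ≤ 0 := Finset.sum_nonpos fun i _ => hc i
  linarith

lemma marginal_nonneg' {U : Type*} [Fintype U] {α : U → U → ℝ}
    (h : ∀ x y, 0 ≤ α x y) (u : U) : 0 ≤ marginal α u :=
  Finset.sum_nonneg fun _ _ => h _ _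

lemma le_marginal' {U : Type*} [Fintype U] {α : U → U → ℝ}
    (h : ∀ x y, 0 ≤ α x y) (u u' : U) : α u u' ≤ marginal α u :=
  Finset.single_le_sum (fun i _ => h u i) (mem_univ u')

lemma spread_of_connected {U : Type*} [Fintype U] {α : U → U → ℝ}
    (hconn : IsConnectedWeight α) (P : U → Prop) {u₁ : U} (h₁ : P u₁)
    (hstep : ∀ u u', P u → 0 < α u u' → P u') : ∀ u, P u := by
  intro u
  by_cases h : u₁ = u
  · exact h ▸ h₁
  · obtain ⟨n, w, hw0, hwl, hedge⟩ := hconn u₁ u h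
    have key : ∀ k (hk : k < n + 1), P (w ⟨k, hk⟩) := by
      intro k
      induction k with
      | zero => intro hk; rw [Fin.mk_zero, hw0]; exact h₁
      | succ m ih =>
        intro hk
        have hm : m < n := Nat.succ_lt_succ_iff.mp hk
        have hedge' := hedge ⟨m, hm⟩
        rw [Fin.castSucc_mk, Fin.succ_mk] at hedge'
        exact hstep _ _ (ih (Nat.lt_of_lt_of_le hm (Nat.le_succ n))) hedge'
    have hl := key n (Nat.lt_succ_self n)
    have heq : (⟨n, Nat.lt_succ_self n⟩ : Fin (n + 1)) = Fin.last n := rfl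
    rwa [heq, hwl] at hl

lemma marginal_pos' {U : Type*} [Fintype U] {α : U → U → ℝ}
    (hα : IsWeightFunction α) (hconn : IsConnectedWeight α) (u : U) :
    0 < marginal α u := by
  by_cases h : ∃ u' : U, u' ≠ u
  · obtain ⟨u', hu'⟩ := h
    obtain ⟨n, w, hw0, hwl, hedge⟩ := hconn u u' (Ne.symm hu')
    cases n with
    | zero =>
      exfalso; apply hu'
      rw [← hwl, ← hw0]; rfl
    | succ m =>
      have h0 := hedge 0
      have hw00 : w (Fin.castSucc 0) = u := hw0
      rw [hw00] at h0
      calc (0:ℝ) < α u (w (Fin.succ 0)) := h0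
        _ ≤ marginal α u := le_marginal' hα.1 _ _
  · push_neg at h
    have huniv : (Finset.univ : Finset U) = {u} := by
      ext x; simp [h x]
    have h1 := hα.2.2
    rw [huniv, Finset.sum_singleton] at h1
    have : marginal α u = 1 := by rw [marginal, huniv]; exact h1
    rw [this]; norm_num

lemma label_eq_of_pos {U V A : Type*} [Fintype U] [Fintype V]
    {α : U → U → ℝ} {β : V → V → ℝ} {ψG : U → A} {ψH : V → A}
    {γ : U × V → U × V → ℝ} (hγ : IsWeightJoining α β γ)
    (hcost : ogjCost (labelCost ψG ψH) γ = 0)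
    {u : U} {v : V} (h : 0 < marginal γ (u, v)) : ψG u = ψH v := by
  classical
  by_contra hne
  unfold ogjCost at hcost
  have hterm : ∀ p ∈ (Finset.univ : Finset (U × V)),
      0 ≤ labelCost ψG ψH p.1 p.2 * marginal γ p := by
    intro p _
    apply mul_nonneg
    · simp only [labelCost]; split <;> norm_num
    · exact marginal_nonneg' hγ.1.1 p
  have hz := (Finset.sum_eq_zero_iff_of_nonneg hterm).mp hcost (u, v) (mem_univ _)
  simp only [labelCost] at hz
  rw [if_neg hne, one_mul] at hz
  rw [hz] at h
  exact lt_irrefl 0 h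

lemma step_pos {U V : Type*} [Fintype U] [Fintype V]
    {α : U → U → ℝ} {β : V → V → ℝ}
    (hα : IsWeightFunction α) (hβ : IsWeightFunction β)
    (hGconn : IsConnectedWeight α) (hHconn : IsConnectedWeight β)
    {γ : U × V → U × V → ℝ} (hγ : IsWeightJoining α β γ)
    {u : U} {v : V} {u' : U} (hr : 0 < marginal γ (u, v)) (ha : 0 < α u u') :
    ∃ v', 0 < γ (u, v) (u', v') ∧ 0 < β v v' ∧ 0 < marginal γ (u', v') := by
  have hp := marginal_pos' hα hGconn u
  have hq := marginal_pos' hβ hHconn v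
  have h1 := hγ.2.2.2.1 u u' v
  have hsum : 0 < ∑ v', γ (u, v) (u', v') := by
    nlinarith [mul_pos ha hr]
  obtain ⟨v', hv'⟩ := exists_pos_of_sum_pos'' hsum
  refine ⟨v', hv', ?_, ?_⟩
  · have h2 := hγ.2.2.2.2 v v' u
    have hle : γ (u, v) (u', v') ≤ ∑ u'', γ (u, v) (u'', v') :=
      Finset.single_le_sum (f := fun u'' => γ (u, v) (u'', v')) (fun i _ => hγ.1.1 _ _) (mem_univ u')
    have hlhs : 0 < marginal β v * ∑ u'', γ (u, v) (u'', v') :=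
      mul_pos hq (lt_of_lt_of_le hv' hle)
    rw [h2] at hlhs
    nlinarith [hr]
  · calc (0:ℝ) < γ (u, v) (u', v') := hv'
      _ = γ (u', v') (u, v) := hγ.1.2.1 _ _
      _ ≤ marginal γ (u', v') := le_marginal' hγ.1.1 _ _

lemma unique_partner {U V A : Type*} [Fintype U] [Fintype V]
    {α : U → U → ℝ} {β : V → V → ℝ} {ψG : U → A} {ψH : V → A}
    (hα : IsWeightFunction α) (hβ : IsWeightFunction β)
    (hGconn : IsConnectedWeight α) (hHconn : IsConnectedWeight β)
    (hlocH : ∀ v v₁ v₂ : V, 0 < β v v₁ → 0 < β v v₂ → ψH v₁ = ψH v₂ → v₁ = v₂)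
    (hmagicH : ∃ v₀ : V, ∀ v : V, ψH v = ψH v₀ → v = v₀)
    {γ : U × V → U × V → ℝ} (hγ : IsWeightJoining α β γ)
    (hcost : ogjCost (labelCost ψG ψH) γ = 0) :
    ∀ u : U, ∃! v : V, 0 < marginal γ (u, v) := by
  obtain ⟨v₀, hv₀⟩ := hmagicH
  set P : U → Prop :=
    fun u => ∃ v, 0 < marginal γ (u, v) ∧ ∀ w, 0 < marginal γ (u, w) → w = v with hP
  have hq := marginal_pos' hβ hHconn
  have hsum : 0 < ∑ u, marginal γ (u, v₀) := by rw [hγ.2.2.1 v₀]; exact hq v₀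
  obtain ⟨u₁, hu₁⟩ := exists_pos_of_sum_pos'' hsum
  have hPu₁ : P u₁ := by
    refine ⟨v₀, hu₁, fun w hw => ?_⟩
    have l1 := label_eq_of_pos hγ hcost hu₁
    have l2 := label_eq_of_pos hγ hcost hw
    exact hv₀ w (l2.symm.trans l1)
  have hstep : ∀ u u', P u → 0 < α u u' → P u' := by
    rintro u u' ⟨v, hv, hvu⟩ ha
    obtain ⟨v', hγv', hβv', hrv'⟩ := step_pos hα hβ hGconn hHconn hγ hv ha
    have huniq : ∀ w, 0 < marginal γ (u', w) → 0 < β v w ∧ ψH w = ψG u' := by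
      intro w hw
      have ha' : 0 < α u' u := by rw [hα.2.1 u' u]; exact ha
      obtain ⟨vt, hγvt, hβvt, hrvt⟩ := step_pos hα hβ hGconn hHconn hγ hw ha'
      have hvt : vt = v := hvu vt hrvt
      rw [hvt] at hβvt
      exact ⟨by rw [hβ.2.1 v w]; exact hβvt, (label_eq_of_pos hγ hcost hw).symm⟩
    refine ⟨v', hrv', fun w hw => ?_⟩
    obtain ⟨hb1, hl1⟩ := huniq w hw
    obtain ⟨hb2, hl2⟩ := huniq v' hrv'
    exact hlocH v w v' hb1 hb2 (hl1.trans hl2.symm)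
  have hall := spread_of_connected hGconn P hPu₁ hstep
  intro u
  obtain ⟨v, hv, hvu⟩ := hall u
  exact ⟨v, hv, hvu⟩

lemma marginal_swap {U V : Type*} [Fintype U] [Fintype V]
    (γ : U × V → U × V → ℝ) (x : V × U) :
    marginal (fun x y => γ (x.2, x.1) (y.2, y.1)) x = marginal γ (x.2, x.1) := by
  unfold marginal
  exact Fintype.sum_equiv (Equiv.prodComm V U) _ _ (fun y => rfl)

lemma swap_joining {U V : Type*} [Fintype U] [Fintype V]
    {α : U → U → ℝ} {β : V → V → ℝ} {γ : U × V → U × V → ℝ}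
    (hγ : IsWeightJoining α β γ) :
    IsWeightJoining β α (fun x y => γ (x.2, x.1) (y.2, y.1)) := by
  obtain ⟨⟨hpos, hsymm, hsum⟩, hm1, hm2, ht1, ht2⟩ := hγ
  refine ⟨⟨fun x y => hpos _ _, fun x y => hsymm _ _, ?_⟩, ?_, ?_, ?_, ?_⟩
  · have hinner : ∀ x : U × V, ∑ y : V × U, γ x (y.2, y.1) = ∑ y : U × V, γ x y :=
      fun x => Fintype.sum_equiv (Equiv.prodComm V U) _ _ (fun y => rfl)
    calc ∑ x : V × U, ∑ y : V × U, γ (x.2, x.1) (y.2, y.1)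
        = ∑ x : U × V, ∑ y : V × U, γ x (y.2, y.1) :=
          Fintype.sum_equiv (Equiv.prodComm V U) _ _ (fun x => rfl)
      _ = ∑ x : U × V, ∑ y : U × V, γ x y := Finset.sum_congr rfl fun x _ => hinner x
      _ = 1 := hsum
  · intro v
    calc ∑ u, marginal (fun x y => γ (x.2, x.1) (y.2, y.1)) (v, u)
        = ∑ u, marginal γ (u, v) := Finset.sum_congr rfl fun u _ => marginal_swap γ (v, u)
      _ = marginal β v := hm2 v
  · intro u
    calc ∑ v, marginal (fun x y => γ (x.2, x.1) (y.2, y.1)) (v, u)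
        = ∑ v, marginal γ (u, v) := Finset.sum_congr rfl fun v _ => marginal_swap γ (v, u)
      _ = marginal α u := hm1 u
  · intro v v' u
    simp only [marginal_swap]
    exact ht2 v v' u
  · intro x x' y
    simp only [marginal_swap]
    exact ht1 x x' y

lemma cost_swap {U V A : Type*} [Fintype U] [Fintype V]
    (ψG : U → A) (ψH : V → A) (γ : U × V → U × V → ℝ) :
    ogjCost (labelCost ψH ψG) (fun x y => γ (x.2, x.1) (y.2, y.1))
      = ogjCost (labelCost ψG ψH) γ := by
  unfold ogjCost
  apply Fintype.sum_equiv (Equiv.prodComm V U)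
  intro p
  simp only [Equiv.prodComm_apply, Prod.fst_swap, Prod.snd_swap, marginal_swap]
  congr 1
  simp only [labelCost]
  by_cases h : ψH p.1 = ψG p.2
  · rw [if_pos h, if_pos h.symm]
  · rw [if_neg h, if_neg (fun hh => h hh.symm)]

lemma unique_partner' {U V A : Type*} [Fintype U] [Fintype V]
    {α : U → U → ℝ} {β : V → V → ℝ} {ψG : U → A} {ψH : V → A}
    (hα : IsWeightFunction α) (hβ : IsWeightFunction β)
    (hGconn : IsConnectedWeight α) (hHconn : IsConnectedWeight β)
    (hlocG : ∀ u u₁ u₂ : U, 0 < α u u₁ → 0 < α u u₂ → ψG u₁ = ψG u₂ → u₁ = u₂)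
    (hmagicG : ∃ u₀ : U, ∀ u : U, ψG u = ψG u₀ → u = u₀)
    {γ : U × V → U × V → ℝ} (hγ : IsWeightJoining α β γ)
    (hcost : ogjCost (labelCost ψG ψH) γ = 0) :
    ∀ v : V, ∃! u : U, 0 < marginal γ (u, v) := by
  intro v
  have hcost' : ogjCost (labelCost ψH ψG) (fun x y => γ (x.2, x.1) (y.2, y.1)) = 0 := by
    rw [cost_swap]; exact hcost
  obtain ⟨u, hu, huniq⟩ :=
    unique_partner hβ hα hHconn hGconn hlocG hmagicG (swap_joining hγ) hcost' v
  rw [marginal_swap] at hu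
  refine ⟨u, hu, fun y hy => huniq y ?_⟩
  show 0 < marginal (fun x y => γ (x.2, x.1) (y.2, y.1)) (v, y)
  rw [marginal_swap]
  exact hy

open Classical in
lemma zero_cost_structure
    {U V A : Type*} [Fintype U] [Fintype V]
    {α : U → U → ℝ} {β : V → V → ℝ}
    (hα : IsWeightFunction α) (hβ : IsWeightFunction β)
    (hGconn : IsConnectedWeight α) (hHconn : IsConnectedWeight β)
    {ψG : U → A} {ψH : V → A}
    (hlocG : ∀ u u₁ u₂ : U, 0 < α u u₁ → 0 < α u u₂ → ψG u₁ = ψG u₂ → u₁ = u₂)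
    (hlocH : ∀ v v₁ v₂ : V, 0 < β v v₁ → 0 < β v v₂ → ψH v₁ = ψH v₂ → v₁ = v₂)
    (hmagicG : ∃ u₀ : U, ∀ u : U, ψG u = ψG u₀ → u = u₀)
    (hmagicH : ∃ v₀ : V, ∀ v : V, ψH v = ψH v₀ → v = v₀)
    {γ : U × V → U × V → ℝ} (hγ : IsWeightJoining α β γ)
    (hcost : ogjCost (labelCost ψG ψH) γ = 0) :
    ∃ f : U → V, Function.Bijective f ∧
      (∀ u u', α u u' = β (f u) (f u')) ∧
      (∀ u, ψH (f u) = ψG u) ∧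
      (∀ u v, 0 < marginal γ (u, v) ↔ v = f u) ∧
      (∀ x y : U × V, γ x y = if x.2 = f x.1 ∧ y.2 = f y.1 then α x.1 y.1 else 0) ∧
      IsBijectiveJoining γ := by
  classical
  have hU := unique_partner hα hβ hGconn hHconn hlocH hmagicH hγ hcost
  have hV := unique_partner' hα hβ hGconn hHconn hlocG hmagicG hγ hcost
  choose f hf hfU using hU
  choose g hg hgU using hV
  have hgf : ∀ u, g (f u) = u := fun u => (hgU (f u) u (hf u)).symm
  have hfg : ∀ v, f (g v) = v := fun v => (hfU (g v) v (hg v)).symm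
  have hbij : Function.Bijective f := Function.bijective_iff_has_inverse.mpr ⟨g, hgf, hfg⟩
  obtain ⟨⟨hpos, hsymm, hsum1⟩, hm1, hm2, ht1, ht2⟩ := id hγ
  have hrzero : ∀ u v, v ≠ f u → marginal γ (u, v) = 0 := by
    intro u v hv
    by_contra h
    have hnn := marginal_nonneg' hpos (u, v)
    exact hv (hfU u v (lt_of_le_of_ne hnn (Ne.symm h)))
  have hrzero' : ∀ v y, y ≠ g v → marginal γ (y, v) = 0 := by
    intro v y hy
    by_contra h
    have hnn := marginal_nonneg' hpos (y, v)
    exact hy (hgU v y (lt_of_le_of_ne hnn (Ne.symm h)))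
  have hrq : ∀ u, marginal γ (u, f u) = marginal α u := by
    intro u
    rw [← hm1 u]
    exact (Finset.sum_eq_single (f u) (fun v _ hv => hrzero u v hv)
      (fun h => absurd (mem_univ _) h)).symm
  have hpq : ∀ v, marginal γ (g v, v) = marginal β v := by
    intro v
    rw [← hm2 v]
    exact (Finset.sum_eq_single (g v) (fun y _ hy => hrzero' v y hy)
      (fun h => absurd (mem_univ _) h)).symm
  have hγzero1 : ∀ (x y : U × V), x.2 ≠ f x.1 → γ x y = 0 := by
    intro x y hx
    have h1 : γ x y ≤ marginal γ x := le_marginal' hpos x y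
    have h2 : marginal γ (x.1, x.2) = 0 := hrzero x.1 x.2 hx
    have h3 := hpos x y
    have h4 : marginal γ x = 0 := h2
    linarith
  have hγzero2 : ∀ (x y : U × V), y.2 ≠ f y.1 → γ x y = 0 := by
    intro x y hy
    rw [hsymm x y]
    exact hγzero1 y x hy
  have hkey : ∀ u u', γ (u, f u) (u', f u') = α u u' := by
    intro u u'
    have h1 := ht1 u u' (f u)
    have hsum : ∑ v', γ (u, f u) (u', v') = γ (u, f u) (u', f u') :=
      Finset.sum_eq_single (f u') (fun v' _ hv' => hγzero2 (u, f u) (u', v') hv')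
        (fun h => absurd (mem_univ _) h)
    rw [hsum, hrq u] at h1
    have hp := marginal_pos' hα hGconn u
    exact mul_left_cancel₀ (ne_of_gt hp) (h1.trans (mul_comm _ _))
  have hweights : ∀ u u', α u u' = β (f u) (f u') := by
    intro u u'
    have h2 := ht2 (f u) (f u') u
    have hsum2 : ∑ u'', γ (u, f u) (u'', f u') = γ (u, f u) (u', f u') := by
      apply Finset.sum_eq_single
      · intro u'' _ hne
        apply hγzero2 (u, f u) (u'', f u')
        intro hcontra
        exact hne (hbij.1 hcontra.symm)
      · intro h; exact absurd (mem_univ _) h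
    have h3 : marginal β (f u) = marginal α u := by
      have hh := hpq (f u)
      rw [hgf u, hrq u] at hh
      exact hh.symm
    rw [hsum2, hkey u u', h3, hrq u] at h2
    have hp := marginal_pos' hα hGconn u
    exact mul_left_cancel₀ (ne_of_gt hp) (h2.trans (mul_comm _ _))
  have hlabels : ∀ u, ψH (f u) = ψG u := fun u => (label_eq_of_pos hγ hcost (hf u)).symm
  have hiff : ∀ u v, 0 < marginal γ (u, v) ↔ v = f u :=
    fun u v => ⟨fun h => hfU u v h, fun h => h ▸ hf u⟩
  refine ⟨f, hbij, hweights, hlabels, hiff, ?_, ?_⟩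
  · rintro ⟨u, v⟩ ⟨u', v'⟩
    by_cases h1 : v = f u
    · by_cases h2 : v' = f u'
      · subst h1; subst h2
        rw [if_pos ⟨rfl, rfl⟩]
        exact hkey u u'
      · rw [if_neg (fun h => h2 h.2)]
        exact hγzero2 (u, v) (u', v') h2
    · rw [if_neg (fun h => h1 h.1)]
      exact hγzero1 (u, v) (u', v') h1
  · exact ⟨fun u => ⟨f u, hf u, hfU u⟩, fun v => ⟨g v, hg v, hgU v⟩⟩

lemma marginal_mix {U V : Type*} [Fintype U] [Fintype V]
    (γ₁ γ₂ : U × V → U × V → ℝ) (x : U × V) :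
    marginal (fun x y => (γ₁ x y + γ₂ x y) / 2) x
      = (marginal γ₁ x + marginal γ₂ x) / 2 := by
  unfold marginal
  rw [← Finset.sum_div, Finset.sum_add_distrib]

lemma zero_cost_unique
    {U V A : Type*} [Fintype U] [Fintype V]
    {α : U → U → ℝ} {β : V → V → ℝ}
    (hα : IsWeightFunction α) (hβ : IsWeightFunction β)
    (hGconn : IsConnectedWeight α) (hHconn : IsConnectedWeight β)
    {ψG : U → A} {ψH : V → A}
    (hlocG : ∀ u u₁ u₂ : U, 0 < α u u₁ → 0 < α u u₂ → ψG u₁ = ψG u₂ → u₁ = u₂)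
    (hlocH : ∀ v v₁ v₂ : V, 0 < β v v₁ → 0 < β v v₂ → ψH v₁ = ψH v₂ → v₁ = v₂)
    (hmagicG : ∃ u₀ : U, ∀ u : U, ψG u = ψG u₀ → u = u₀)
    (hmagicH : ∃ v₀ : V, ∀ v : V, ψH v = ψH v₀ → v = v₀)
    {γ₁ γ₂ : U × V → U × V → ℝ}
    (h1 : IsWeightJoining α β γ₁) (hc1 : ogjCost (labelCost ψG ψH) γ₁ = 0)
    (h2 : IsWeightJoining α β γ₂) (hc2 : ogjCost (labelCost ψG ψH) γ₂ = 0) :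
    γ₁ = γ₂ := by
  set δ : U × V → U × V → ℝ := fun x y => (γ₁ x y + γ₂ x y) / 2 with hδdef
  obtain ⟨⟨p1, s1, t1⟩, m11, m12, tt11, tt12⟩ := id h1
  obtain ⟨⟨p2, s2, t2⟩, m21, m22, tt21, tt22⟩ := id h2
  have hsumδ : ∀ (x : U × V) (u' : U) (v : V),
      (∑ v', δ x (u', v')) = ((∑ v', γ₁ x (u', v')) + ∑ v', γ₂ x (u', v')) / 2 := by
    intro x u' v
    rw [← Finset.sum_div, Finset.sum_add_distrib]
  have hsumδ' : ∀ (x : U × V) (v' : V),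
      (∑ u', δ x (u', v')) = ((∑ u', γ₁ x (u', v')) + ∑ u', γ₂ x (u', v')) / 2 := by
    intro x v'
    rw [← Finset.sum_div, Finset.sum_add_distrib]
  have hδJ : IsWeightJoining α β δ := by
    refine ⟨⟨fun x y => div_nonneg (add_nonneg (p1 x y) (p2 x y)) (by norm_num), fun x y => by simp only [hδdef]; rw [s1, s2], ?_⟩,
      ?_, ?_, ?_, ?_⟩
    · have : ∀ x : U × V, ∑ y, δ x y = ((∑ y, γ₁ x y) + ∑ y, γ₂ x y) / 2 := by
        intro x; rw [← Finset.sum_div, Finset.sum_add_distrib]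
      rw [Finset.sum_congr rfl fun x _ => this x, ← Finset.sum_div, Finset.sum_add_distrib,
        t1, t2]
      norm_num
    · intro u
      rw [Finset.sum_congr rfl fun v _ => marginal_mix γ₁ γ₂ (u, v), ← Finset.sum_div,
        Finset.sum_add_distrib, m11, m21]
      ring
    · intro v
      rw [Finset.sum_congr rfl fun u _ => marginal_mix γ₁ γ₂ (u, v), ← Finset.sum_div,
        Finset.sum_add_distrib, m12, m22]
      ring
    · intro u u' v
      rw [marginal_mix, hsumδ (u, v) u' v]
      linear_combination tt11 u u' v / 2 + tt21 u u' v / 2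
    · intro v v' u
      rw [marginal_mix, hsumδ' (u, v) v']
      linear_combination tt12 v v' u / 2 + tt22 v v' u / 2
  have hcδ : ogjCost (labelCost ψG ψH) δ = 0 := by
    unfold ogjCost
    have : ∀ p : U × V, labelCost ψG ψH p.1 p.2 * marginal δ p
        = (labelCost ψG ψH p.1 p.2 * marginal γ₁ p
            + labelCost ψG ψH p.1 p.2 * marginal γ₂ p) / 2 := by
      intro p; rw [marginal_mix]; ring
    rw [Finset.sum_congr rfl fun p _ => this p, ← Finset.sum_div, Finset.sum_add_distrib]
    unfold ogjCost at hc1 hc2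
    rw [hc1, hc2]
    norm_num
  obtain ⟨f1, -, -, -, hiff1, hform1, -⟩ :=
    zero_cost_structure hα hβ hGconn hHconn hlocG hlocH hmagicG hmagicH h1 hc1
  obtain ⟨f2, -, -, -, hiff2, hform2, -⟩ :=
    zero_cost_structure hα hβ hGconn hHconn hlocG hlocH hmagicG hmagicH h2 hc2
  obtain ⟨fδ, -, -, -, hiffδ, -, -⟩ :=
    zero_cost_structure hα hβ hGconn hHconn hlocG hlocH hmagicG hmagicH hδJ hcδ
  have hf12 : f1 = f2 := by
    funext u
    have hn1 := marginal_nonneg' p2 (u, f1 u)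
    have hn2 := marginal_nonneg' p1 (u, f2 u)
    have hδ1 : 0 < marginal δ (u, f1 u) := by
      rw [marginal_mix]
      have := (hiff1 u (f1 u)).mpr rfl
      linarith
    have hδ2 : 0 < marginal δ (u, f2 u) := by
      rw [marginal_mix]
      have := (hiff2 u (f2 u)).mpr rfl
      linarith
    have e1 := (hiffδ u (f1 u)).mp hδ1
    have e2 := (hiffδ u (f2 u)).mp hδ2
    rw [e1, e2]
  funext x y
  rw [hform1 x y, hform2 x y, hf12]

lemma indep_joining {U V : Type*} [Fintype U] [Fintype V]
    {α : U → U → ℝ} {β : V → V → ℝ}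
    (hα : IsWeightFunction α) (hβ : IsWeightFunction β) :
    IsWeightJoining α β (fun x y => α x.1 y.1 * β x.2 y.2) := by
  obtain ⟨hαn, hαs, hαt⟩ := hα
  obtain ⟨hβn, hβs, hβt⟩ := hβ
  have hpsum : ∑ u : U, marginal α u = 1 := hαt
  have hqsum : ∑ v : V, marginal β v = 1 := hβt
  have hmarg : ∀ x : U × V, (∑ y : U × V, α x.1 y.1 * β x.2 y.2)
      = marginal α x.1 * marginal β x.2 := by
    intro x
    rw [Fintype.sum_prod_type]
    rw [marginal, marginal, Finset.sum_mul_sum]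
  have hmarg' : ∀ x : U × V,
      marginal (fun x y => α x.1 y.1 * β x.2 y.2) x
        = marginal α x.1 * marginal β x.2 := fun x => hmarg x
  refine ⟨⟨fun x y => mul_nonneg (hαn _ _) (hβn _ _),
    fun x y => by show α x.1 y.1 * β x.2 y.2 = α y.1 x.1 * β y.2 x.2
                  rw [hαs x.1 y.1, hβs x.2 y.2], ?_⟩, ?_, ?_, ?_, ?_⟩
  · rw [Finset.sum_congr rfl fun x _ => hmarg x, Fintype.sum_prod_type]
    dsimp only
    rw [← Finset.sum_mul_sum, hpsum, hqsum]
    norm_num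
  · intro u
    rw [Finset.sum_congr rfl fun v _ => hmarg' (u, v)]
    dsimp only
    rw [← Finset.mul_sum, hqsum, mul_one]
  · intro v
    rw [Finset.sum_congr rfl fun u _ => hmarg' (u, v)]
    dsimp only
    rw [← Finset.sum_mul, hpsum, one_mul]
  · intro u u' v
    rw [hmarg' (u, v)]
    have : (∑ v' : V, α u u' * β v v') = α u u' * marginal β v := by
      rw [marginal, Finset.mul_sum]
    rw [this]
    ring
  · intro v v' u
    rw [hmarg' (u, v)]
    have : (∑ u'' : U, α u u'' * β v v') = marginal α u * β v v' := by
      rw [marginal, Finset.sum_mul]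
    rw [this]
    ring

/-- Let `G` and `H` be connected weighted graphs whose label
functions are locally injective and have magic symbols.  If `ρ_{c_Ψ}(G,H) = 0`, then
(1) there is a graph isomorphism from `G` to `H` preserving weights and labels, and
(2) the set of optimal weight joinings is a singleton whose unique element is
bijective. -/
theorem detection_and_identification_with_magic_symbols
    {U V A : Type*} [Fintype U] [Fintype V]
    (α : U → U → ℝ) (β : V → V → ℝ)
    (hα : IsWeightFunction α) (hβ : IsWeightFunction β)
    (hGconn : IsConnectedWeight α) (hHconn : IsConnectedWeight β)
    (ψG : U → A) (ψH : V → A)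
    (hlocG : ∀ u u₁ u₂ : U, 0 < α u u₁ → 0 < α u u₂ → ψG u₁ = ψG u₂ → u₁ = u₂)
    (hlocH : ∀ v v₁ v₂ : V, 0 < β v v₁ → 0 < β v v₂ → ψH v₁ = ψH v₂ → v₁ = v₂)
    (hmagicG : ∃ u₀ : U, ∀ u : U, ψG u = ψG u₀ → u = u₀)
    (hmagicH : ∃ v₀ : V, ∀ v : V, ψH v = ψH v₀ → v = v₀)
    (hρ : sInf {x : ℝ | ∃ γ ∈ weightJoinings α β, x = ogjCost (labelCost ψG ψH) γ} = 0) :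
    (∃ f : U → V, Function.Bijective f ∧
      (∀ u u' : U, α u u' = β (f u) (f u')) ∧
      (∀ u : U, ψH (f u) = ψG u)) ∧
    (∃ γ : U × V → U × V → ℝ,
      optimalJoinings α β (labelCost ψG ψH) = {γ} ∧ IsBijectiveJoining γ) := by
  classical
  have hind : IsWeightJoining α β (fun x y => α x.1 y.1 * β x.2 y.2) := indep_joining hα hβ
  have hevalcont : ∀ (x y : U × V), Continuous (fun γ : U × V → U × V → ℝ => γ x y) :=
    fun x y => (continuous_apply y).comp (continuous_apply x)
  have hmargcont : ∀ x : U × V, Continuous (fun γ : U × V → U × V → ℝ => marginal γ x) := by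
    intro x
    simp only [marginal]
    exact continuous_finset_sum _ fun y _ => hevalcont x y
  have hcostcont : Continuous (fun γ : U × V → U × V → ℝ => ogjCost (labelCost ψG ψH) γ) := by
    simp only [ogjCost]
    exact continuous_finset_sum _ fun p _ => continuous_const.mul (hmargcont p)
  have hSclosed : IsClosed (weightJoinings α β) := by
    have hrep : weightJoinings α β =
        (⋂ (x : U × V), ⋂ (y : U × V), {γ : U × V → U × V → ℝ | 0 ≤ γ x y}) ∩
        ((⋂ (x : U × V), ⋂ (y : U × V), {γ : U × V → U × V → ℝ | γ x y = γ y x}) ∩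
        (({γ : U × V → U × V → ℝ | ∑ x : U × V, ∑ y : U × V, γ x y = 1}) ∩
        ((⋂ u : U, {γ : U × V → U × V → ℝ | ∑ v, marginal γ (u, v) = marginal α u}) ∩
        ((⋂ v : V, {γ : U × V → U × V → ℝ | ∑ u, marginal γ (u, v) = marginal β v}) ∩
        ((⋂ (u : U), ⋂ (u' : U), ⋂ (v : V), {γ : U × V → U × V → ℝ |
            marginal α u * ∑ v', γ (u, v) (u', v') = α u u' * marginal γ (u, v)}) ∩
        (⋂ (v : V), ⋂ (v' : V), ⋂ (u : U), {γ : U × V → U × V → ℝ |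
            marginal β v * ∑ u', γ (u, v) (u', v') = β v v' * marginal γ (u, v)})))))) := by
      ext γ
      simp only [weightJoinings, IsWeightJoining, IsWeightFunction, Set.mem_setOf_eq,
        Set.mem_inter_iff, Set.mem_iInter]
      tauto
    rw [hrep]
    refine IsClosed.inter ?_ (IsClosed.inter ?_ (IsClosed.inter ?_ (IsClosed.inter ?_
      (IsClosed.inter ?_ (IsClosed.inter ?_ ?_)))))
    · exact isClosed_iInter fun x => isClosed_iInter fun y =>
        isClosed_le continuous_const (hevalcont x y)
    · exact isClosed_iInter fun x => isClosed_iInter fun y =>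
        isClosed_eq (hevalcont x y) (hevalcont y x)
    · exact isClosed_eq (continuous_finset_sum _ fun x _ =>
        continuous_finset_sum _ fun y _ => hevalcont x y) continuous_const
    · exact isClosed_iInter fun u => isClosed_eq
        (continuous_finset_sum _ fun v _ => hmargcont (u, v)) continuous_const
    · exact isClosed_iInter fun v => isClosed_eq
        (continuous_finset_sum _ fun u _ => hmargcont (u, v)) continuous_const
    · exact isClosed_iInter fun u => isClosed_iInter fun u' => isClosed_iInter fun v =>
        isClosed_eq (continuous_const.mul
          (continuous_finset_sum _ fun v' _ => hevalcont (u, v) (u', v')))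
          (continuous_const.mul (hmargcont (u, v)))
    · exact isClosed_iInter fun v => isClosed_iInter fun v' => isClosed_iInter fun u =>
        isClosed_eq (continuous_const.mul
          (continuous_finset_sum _ fun u' _ => hevalcont (u, v) (u', v')))
          (continuous_const.mul (hmargcont (u, v)))
  have hSbdd : Bornology.IsBounded (weightJoinings α β) := by
    apply Bornology.IsBounded.subset
      (Metric.isBounded_closedBall (x := (0 : U × V → U × V → ℝ)) (r := 1))
    intro γ hγm
    have hJ : IsWeightJoining α β γ := hγm
    obtain ⟨⟨hpos, hsymm, hsum⟩, -⟩ := hJ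
    rw [Metric.mem_closedBall, dist_zero_right]
    rw [pi_norm_le_iff_of_nonneg (by norm_num : (0:ℝ) ≤ 1)]
    intro x
    rw [pi_norm_le_iff_of_nonneg (by norm_num : (0:ℝ) ≤ 1)]
    intro y
    rw [Real.norm_eq_abs, abs_le]
    constructor
    · linarith [hpos x y]
    · calc γ x y ≤ marginal γ x := le_marginal' hpos x y
        _ ≤ ∑ x', marginal γ x' :=
          Finset.single_le_sum (f := fun x' => marginal γ x')
            (fun i _ => marginal_nonneg' hpos i) (mem_univ x)
        _ = 1 := hsum
  have hScpt : IsCompact (weightJoinings α β) :=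
    Metric.isCompact_of_isClosed_isBounded hSclosed hSbdd
  have hT : {x : ℝ | ∃ γ ∈ weightJoinings α β, x = ogjCost (labelCost ψG ψH) γ}
      = (fun γ => ogjCost (labelCost ψG ψH) γ) '' (weightJoinings α β) := by
    ext x
    constructor
    · rintro ⟨γ, hγm, rfl⟩; exact ⟨γ, hγm, rfl⟩
    · rintro ⟨γ, hγm, rfl⟩; exact ⟨γ, hγm, rfl⟩
  have hTcpt : IsCompact ((fun γ => ogjCost (labelCost ψG ψH) γ) '' (weightJoinings α β)) :=
    hScpt.image hcostcont
  have hTne : ((fun γ => ogjCost (labelCost ψG ψH) γ) '' (weightJoinings α β)).Nonempty :=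
    ⟨_, ⟨_, hind, rfl⟩⟩
  have hmem := hTcpt.sInf_mem hTne
  rw [← hT, hρ] at hmem
  obtain ⟨γ₀, hγ₀S, hγ₀c⟩ := hmem
  replace hγ₀c := hγ₀c.symm
  have hγ₀J : IsWeightJoining α β γ₀ := hγ₀S
  obtain ⟨f, hbijf, hw, hl, hifff, hformf, hbijj⟩ :=
    zero_cost_structure hα hβ hGconn hHconn hlocG hlocH hmagicG hmagicH hγ₀J hγ₀c
  have hnonneg : ∀ γ', IsWeightJoining α β γ' → 0 ≤ ogjCost (labelCost ψG ψH) γ' := by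
    intro γ' h
    apply Finset.sum_nonneg
    intro p _
    apply mul_nonneg _ (marginal_nonneg' h.1.1 p)
    simp only [labelCost]
    split <;> norm_num
  refine ⟨⟨f, hbijf, hw, hl⟩, γ₀, ?_, hbijj⟩
  ext γ'
  simp only [optimalJoinings, weightJoinings, Set.mem_setOf_eq, Set.mem_sep_iff,
    Set.mem_singleton_iff]
  constructor
  · rintro ⟨hJ, hopt⟩
    have hc0 : ogjCost (labelCost ψG ψH) γ' = 0 := by
      have h1 := hopt γ₀ hγ₀S
      rw [hγ₀c] at h1
      exact le_antisymm h1 (hnonneg γ' hJ)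
    exact zero_cost_unique hα hβ hGconn hHconn hlocG hlocH hmagicG hmagicH hJ hc0 hγ₀J hγ₀c
  · rintro rfl
    exact ⟨hγ₀J, fun γ'' hγ'' => by rw [hγ₀c]; exact hnonneg γ'' hγ''⟩
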